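/- arXiv:2411.07789 — 2 statements merged into one kernel-verified Lean document; each statement's English description precedes it below -/
import Mathlib

section
/- Let a > 3, set τ_a = a^a/(a−1)^{a−1}, let c ∈ ℂ⁴, and define ψ₀ : ℝ³ → ℂ⁴ by ψ₀(x) = exp( (a/(a−1))^a (1+|x|)^{1−a} ) c. Then all three integrals below are finite and equal: τ_a² ∫_{ℝ³} |ψ₀(x)|² (1+|x|)^{−a} dx = τ_a² ∫_{ℝ³} |((1+2S·L)ψ₀)(x)|² (1+|x|)^{−a} dx = ∫_{ℝ³} |−i Σ_{j=1}^3 α_j ∂_jψ₀(x)|² (1+|x|)^{a} dx. In particular, for c ≠ 0, ψ₀ is a nonzero minimizer attaining equality in the weighted Hardy–Dirac inequality with m = 0 and weights ω = η = (1+|x|)^a. -/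
open MeasureTheory Real ComplexConjugate
open scoped InnerProductSpace

noncomputable section

abbrev R3 := EuclideanSpace ℝ (Fin 3)
abbrev C4 := EuclideanSpace ℂ (Fin 4)

/-- The Pauli matrices. -/
def pauli : Fin 3 → Matrix (Fin 2) (Fin 2) ℂ
  | 0 => !![0, 1; 1, 0]
  | 1 => !![0, -Complex.I; Complex.I, 0]
  | 2 => !![1, 0; 0, -1]

/-- Reindex a 2×2 block matrix as a 4×4 matrix. -/
def blocks4 (A B C D : Matrix (Fin 2) (Fin 2) ℂ) : Matrix (Fin 4) (Fin 4) ℂ :=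
  Matrix.reindex finSumFinEquiv finSumFinEquiv (Matrix.fromBlocks A B C D)

/-- The Dirac alpha matrices. -/
def diracAlpha (j : Fin 3) : Matrix (Fin 4) (Fin 4) ℂ :=
  blocks4 0 (pauli j) (pauli j) 0

/-- The Dirac beta matrix. -/
def diracBeta : Matrix (Fin 4) (Fin 4) ℂ :=
  blocks4 1 0 0 (-1)

/-- The spin matrices Sⱼ. -/
def spinS (j : Fin 3) : Matrix (Fin 4) (Fin 4) ℂ :=
  (1/2 : ℂ) • blocks4 (pauli j) 0 0 (pauli j)

/-- Action of a 4×4 complex matrix on ℂ⁴. -/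
def act (M : Matrix (Fin 4) (Fin 4) ℂ) (v : C4) : C4 :=
  WithLp.toLp 2 (M.mulVec v)

/-- Partial derivative of a ℂ⁴-valued function on ℝ³. -/
def pderiv3 (j : Fin 3) (ψ : R3 → C4) (x : R3) : C4 :=
  fderiv ℝ ψ x (EuclideanSpace.single j 1)

/-- The free Dirac operator with mass m. -/
def diracOp (m : ℝ) (ψ : R3 → C4) (x : R3) : C4 :=
  (-Complex.I) • ∑ j, act (diracAlpha j) (pderiv3 j ψ x) + (m : ℂ) • act diracBeta (ψ x)

/-- The massless Dirac operator `-iα·∇`. -/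
def masslessDirac (ψ : R3 → C4) (x : R3) : C4 :=
  (-Complex.I) • ∑ j, act (diracAlpha j) (pderiv3 j ψ x)

/-- The orbital angular momentum component Lⱼψ = −i (x × ∇ψ)ⱼ. -/
def orbL (j : Fin 3) (ψ : R3 → C4) (x : R3) : C4 :=
  (-Complex.I) • ((x (j + 1) : ℂ) • pderiv3 (j + 2) ψ x - (x (j + 2) : ℂ) • pderiv3 (j + 1) ψ x)

/-- The spin-orbit operator (1 + 2 S·L). -/
def spinOrbit (ψ : R3 → C4) (x : R3) : C4 :=
  ψ x + (2 : ℂ) • ∑ j, act (spinS j) (orbL j ψ x)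

/-- The radial derivative of a scalar function on ℝ³. -/
def radialDeriv (f : R3 → ℝ) (x : R3) : ℝ :=
  ∑ j, (x j / ‖x‖) * fderiv ℝ f x (EuclideanSpace.single j 1)

/-- The radial derivative of a ℂ⁴-valued function on ℝ³. -/
def radialDerivV (ψ : R3 → C4) (x : R3) : C4 :=
  ∑ j, ((x j / ‖x‖ : ℝ) : ℂ) • pderiv3 j ψ x

/-- α·x̂, the Dirac matrix contracted with the unit radial vector. -/
def alphaHat (x : R3) : Matrix (Fin 4) (Fin 4) ℂ :=
  ∑ j, ((x j / ‖x‖ : ℝ) : ℂ) • diracAlpha j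

/-- A function on ℝ³ is radial if it depends only on the norm of its argument. -/
def IsRadial {E : Type*} (f : R3 → E) : Prop :=
  ∀ x y : R3, ‖x‖ = ‖y‖ → f x = f y


/-! ### Auxiliary lemmas -/

lemma dA0 : diracAlpha 0 = !![0,0,0,1; 0,0,1,0; 0,1,0,0; 1,0,0,0] := by
  ext i j; fin_cases i <;> fin_cases j <;> rfl

lemma dA1 : diracAlpha 1 =
    !![0,0,0,-Complex.I; 0,0,Complex.I,0; 0,-Complex.I,0,0; Complex.I,0,0,0] := by
  ext i j; fin_cases i <;> fin_cases j <;> rfl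

lemma dA2 : diracAlpha 2 = !![0,0,1,0; 0,0,0,-1; 1,0,0,0; 0,-1,0,0] := by
  ext i j; fin_cases i <;> fin_cases j <;> rfl

lemma normsq_c4 (v : C4) : ‖v‖^2 = ∑ i, Complex.normSq (v i) := by
  rw [EuclideanSpace.norm_eq, sq_sqrt (by positivity)]
  refine Finset.sum_congr rfl fun i _ => ?_
  rw [Complex.sq_norm]

lemma normsq_r3 (x : R3) : ‖x‖^2 = ∑ j, (x j)^2 := by
  rw [EuclideanSpace.norm_eq, sq_sqrt (by positivity)]
  refine Finset.sum_congr rfl fun i _ => ?_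
  rw [Real.norm_eq_abs, sq_abs]

set_option maxHeartbeats 1000000 in
lemma key_alpha_norm (u : Fin 3 → ℝ) (c : C4) :
    ‖∑ j, ((u j : ℂ)) • act (diracAlpha j) c‖^2 = (∑ j, (u j)^2) * ‖c‖^2 := by
  rw [normsq_c4, normsq_c4]
  simp only [Fin.sum_univ_three, Fin.sum_univ_four, dA0, dA1, dA2, PiLp.add_apply,
    PiLp.smul_apply, act, PiLp.toLp_apply, Matrix.mulVec, dotProduct, smul_eq_mul]
  norm_num [Matrix.cons_val_zero, Matrix.cons_val_one, Matrix.cons_val_two, Matrix.cons_val_three, Matrix.head_cons]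
  simp only [Complex.normSq_apply, Complex.add_re, Complex.add_im, Complex.mul_re, Complex.mul_im,
    Complex.ofReal_re, Complex.ofReal_im, Complex.I_re, Complex.I_im, Complex.neg_re,
    Complex.neg_im, mul_zero, zero_mul, zero_add, add_zero, neg_zero, mul_one, mul_neg, neg_neg,
    zero_sub, sub_zero, neg_mul, one_mul]
  generalize (c 0).re = p0
  generalize (c 0).im = q0
  generalize (c 1).re = p1
  generalize (c 1).im = q1
  generalize (c 2).re = p2
  generalize (c 2).im = q2
  generalize (c 3).re = p3
  generalize (c 3).im = q3
  generalize u 0 = v0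
  generalize u 1 = v1
  generalize u 2 = v2
  ring

lemma act_smul (M : Matrix (Fin 4) (Fin 4) ℂ) (z : ℂ) (v : C4) :
    act M (z • v) = z • act M v := by
  unfold act
  rw [WithLp.ofLp_smul, Matrix.mulVec_smul, WithLp.toLp_smul]

lemma hasFDerivAt_norm' (x : R3) (hx : x ≠ 0) :
    HasFDerivAt (fun y : R3 => ‖y‖) (‖x‖⁻¹ • innerSL ℝ x) x := by
  have hsq : (‖x‖^2 : ℝ) ≠ 0 := pow_ne_zero _ (norm_ne_zero_iff.2 hx)
  have hnormsq : HasFDerivAt (fun y : R3 => ‖y‖^2) ((2:ℕ) • innerSL ℝ x) x :=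
    (hasStrictFDerivAt_norm_sq x).hasFDerivAt
  have h := (Real.hasDerivAt_sqrt hsq).comp_hasFDerivAt x hnormsq
  have heq : (fun y : R3 => ‖y‖) = fun y => Real.sqrt (‖y‖^2) :=
    funext fun y => (Real.sqrt_sq (norm_nonneg y)).symm
  rw [heq]
  refine h.congr_fderiv ?_
  symm
  rw [Real.sqrt_sq (norm_nonneg x)]
  ext v
  have hn : ‖x‖ ≠ 0 := norm_ne_zero_iff.2 hx
  simp only [ContinuousLinearMap.coe_smul', Pi.smul_apply, smul_eq_mul,
    Nat.cast_smul_eq_nsmul]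
  field_simp
  ring

lemma hasFDerivAt_psi (K b : ℝ) (c : C4) (x : R3) (hx : x ≠ 0) :
    HasFDerivAt (fun y : R3 => (↑(Real.exp (K * (1+‖y‖)^b)) : ℂ) • c)
      ((Real.exp (K * (1+‖x‖)^b) • (K • ((b * (1+‖x‖)^(b-1)) •
        (‖x‖⁻¹ • innerSL ℝ x)))).smulRight c) x := by
  have hfun : (fun y : R3 => (↑(Real.exp (K * (1+‖y‖)^b)) : ℂ) • c)
      = fun y => Real.exp (K * (1+‖y‖)^b) • c := funext fun y => Complex.coe_smul _ _
  rw [hfun]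
  have h1 : HasFDerivAt (fun y : R3 => 1 + ‖y‖) (‖x‖⁻¹ • innerSL ℝ x) x :=
    (hasFDerivAt_norm' x hx).const_add 1
  have h2 : HasDerivAt (fun t : ℝ => t ^ b) (b * (1+‖x‖)^(b-1)) (1+‖x‖) :=
    Real.hasDerivAt_rpow_const (Or.inl (by positivity))
  have h3 := h2.comp_hasFDerivAt x h1
  have h4 := h3.const_mul K
  have h5 := (Real.hasDerivAt_exp (K * (1+‖x‖)^b)).comp_hasFDerivAt x h4
  exact h5.smul_const c

lemma pderiv3_psi (K b : ℝ) (c : C4) (x : R3) (hx : x ≠ 0) (j : Fin 3) :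
    pderiv3 j (fun y : R3 => (↑(Real.exp (K * (1+‖y‖)^b)) : ℂ) • c) x
    = ((Real.exp (K * (1+‖x‖)^b) * (K * b * (1+‖x‖)^(b-1)) * (x j / ‖x‖) : ℝ) : ℂ) • c := by
  unfold pderiv3
  rw [(hasFDerivAt_psi K b c x hx).fderiv]
  simp only [ContinuousLinearMap.smulRight_apply, ContinuousLinearMap.coe_smul',
    Pi.smul_apply, innerSL_apply_apply, smul_eq_mul]
  rw [Complex.coe_smul]
  congr 1
  rw [real_inner_comm]
  simp [EuclideanSpace.inner_single_left]
  ring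

/-- The explicit minimiser for the polynomial weight in the massless case:
all three integrals are finite and equal. -/
theorem attained_polynomial_weight (a : ℝ) (ha : 3 < a) (c : C4) (ψ₀ : R3 → C4)
    (hψ₀ : ∀ x : R3, ψ₀ x =
      (Real.exp ((a / (a - 1)) ^ a * (1 + ‖x‖) ^ (1 - a)) : ℂ) • c) :
    (Integrable (fun x : R3 => ‖ψ₀ x‖ ^ 2 * (1 + ‖x‖) ^ (-a)) ∧
      Integrable (fun x : R3 => ‖spinOrbit ψ₀ x‖ ^ 2 * (1 + ‖x‖) ^ (-a)) ∧
      Integrable (fun x : R3 => ‖masslessDirac ψ₀ x‖ ^ 2 * (1 + ‖x‖) ^ a)) ∧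
    ((a ^ a / (a - 1) ^ (a - 1)) ^ 2 * ∫ x : R3, ‖ψ₀ x‖ ^ 2 * (1 + ‖x‖) ^ (-a) =
      (a ^ a / (a - 1) ^ (a - 1)) ^ 2 *
        ∫ x : R3, ‖spinOrbit ψ₀ x‖ ^ 2 * (1 + ‖x‖) ^ (-a)) ∧
    ((a ^ a / (a - 1) ^ (a - 1)) ^ 2 *
        ∫ x : R3, ‖spinOrbit ψ₀ x‖ ^ 2 * (1 + ‖x‖) ^ (-a) =
      ∫ x : R3, ‖masslessDirac ψ₀ x‖ ^ 2 * (1 + ‖x‖) ^ a) ∧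
    (c ≠ 0 → ψ₀ ≠ 0) := by
  have hf : ψ₀ = fun y : R3 => (↑(Real.exp ((a/(a-1))^a * (1+‖y‖)^(1-a))) : ℂ) • c :=
    funext hψ₀
  subst hf
  set K : ℝ := (a/(a-1))^a with hK
  set b : ℝ := 1 - a with hb
  set τ : ℝ := a^a/(a-1)^(a-1) with hτ
  have ha1 : (0:ℝ) < a - 1 := by linarith
  have ha0 : (0:ℝ) < a := by linarith
  have hKpos : 0 < K := Real.rpow_pos_of_pos (by positivity) _
  -- K * (a - 1) = τ
  have hKb : K * b = -τ := by
    have h1 : K = a^a / (a-1)^a := Real.div_rpow ha0.le ha1.le a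
    have h2 : (a-1:ℝ)^(a-1) = (a-1)^a / (a-1) := by
      rw [Real.rpow_sub ha1, Real.rpow_one]
    have h4 : (0:ℝ) < (a-1)^a := Real.rpow_pos_of_pos ha1 _
    rw [hτ, hb, h1, h2]
    field_simp
    ring
  -- abbreviations
  set g : R3 → ℝ := fun x => Real.exp (K * (1+‖x‖)^b) with hg
  set E : R3 → ℝ := fun x => g x * (K * b * (1+‖x‖)^(b-1)) with hE
  have hgpos : ∀ x : R3, 0 < g x := fun x => Real.exp_pos _
  -- norm of ψ₀
  have hψnorm : ∀ x : R3, ‖(↑(g x) : ℂ) • c‖^2 = (g x)^2 * ‖c‖^2 := by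
    intro x
    rw [Complex.coe_smul, norm_smul, Real.norm_eq_abs, abs_of_pos (hgpos x), mul_pow]
  -- derivative formula
  have hD : ∀ x : R3, x ≠ 0 → ∀ j : Fin 3,
      pderiv3 j (fun y : R3 => (↑(g y) : ℂ) • c) x = ((E x * (x j / ‖x‖) : ℝ) : ℂ) • c := by
    intro x hx j
    have := pderiv3_psi K b c x hx j
    simpa only [hE, hg, mul_assoc] using this
  -- spin-orbit acts trivially
  have horb : ∀ (x : R3) (j : Fin 3), orbL j (fun y : R3 => (↑(g y) : ℂ) • c) x = 0 := by
    intro x j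
    by_cases hx : x = 0
    · subst hx
      simp [orbL]
    · unfold orbL
      rw [hD x hx, hD x hx, smul_smul, smul_smul, ← sub_smul]
      have : ((x (j+1) : ℂ)) * ((E x * (x (j+2) / ‖x‖) : ℝ) : ℂ)
          - ((x (j+2) : ℂ)) * ((E x * (x (j+1) / ‖x‖) : ℝ) : ℂ) = 0 := by
        push_cast
        ring
      rw [this, zero_smul, smul_zero]
  have hspin : ∀ x : R3, spinOrbit (fun y : R3 => (↑(g y) : ℂ) • c) x
      = (↑(g x) : ℂ) • c := by
    intro x
    unfold spinOrbit
    simp only [horb]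
    have : ∀ j : Fin 3, act (spinS j) (0 : C4) = 0 := by
      intro j
      unfold act
      rw [WithLp.ofLp_zero, Matrix.mulVec_zero, WithLp.toLp_zero]
    simp [this]
  -- massless Dirac pointwise
  have hMD : ∀ x : R3, x ≠ 0 →
      ‖masslessDirac (fun y : R3 => (↑(g y) : ℂ) • c) x‖^2 = (E x)^2 * ‖c‖^2 := by
    intro x hx
    have hxn : ‖x‖ ≠ 0 := norm_ne_zero_iff.2 hx
    unfold masslessDirac
    rw [norm_smul]
    have h1 : ∀ j : Fin 3, act (diracAlpha j) (pderiv3 j (fun y : R3 => (↑(g y) : ℂ) • c) x)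
        = ((E x * (x j / ‖x‖) : ℝ) : ℂ) • act (diracAlpha j) c := by
      intro j
      rw [hD x hx j, act_smul]
    rw [Finset.sum_congr rfl fun j _ => h1 j]
    have h3 : ∑ j : Fin 3, (E x * (x j / ‖x‖))^2 = (E x)^2 := by
      have : ∑ j : Fin 3, (E x * (x j / ‖x‖))^2
          = ((E x)^2 / ‖x‖^2) * ∑ j : Fin 3, (x j)^2 := by
        rw [Finset.mul_sum]
        refine Finset.sum_congr rfl fun j _ => ?_
        field_simp
      rw [this, ← normsq_r3]
      field_simp
    rw [show ‖(-Complex.I)‖ = 1 by simp, one_mul,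
      key_alpha_norm (fun j => E x * (x j / ‖x‖)) c, h3]
  -- pointwise identity for the third integrand
  have hpt : ∀ x : R3, x ≠ 0 →
      ‖masslessDirac (fun y : R3 => (↑(g y) : ℂ) • c) x‖^2 * (1+‖x‖)^a
      = τ^2 * (‖(↑(g x) : ℂ) • c‖^2 * (1+‖x‖)^(-a)) := by
    intro x hx
    have hxp : (0:ℝ) < 1 + ‖x‖ := by positivity
    rw [hMD x hx, hψnorm x]
    have hb1 : b - 1 = -a := by rw [hb]; ring
    have hE2 : (E x)^2 = τ^2 * (g x)^2 * ((1+‖x‖)^(-a))^2 := by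
      rw [hE, hb1, hKb]
      ring
    have hrp : ((1+‖x‖)^(-a))^2 * (1+‖x‖)^a = (1+‖x‖)^(-a) := by
      rw [sq, mul_assoc, ← Real.rpow_add hxp]
      norm_num
    rw [hE2]
    calc τ^2 * (g x)^2 * ((1+‖x‖)^(-a))^2 * ‖c‖^2 * (1+‖x‖)^a
        = τ^2 * (g x)^2 * ‖c‖^2 * (((1+‖x‖)^(-a))^2 * (1+‖x‖)^a) := by ring
      _ = τ^2 * ((g x)^2 * ‖c‖^2 * (1+‖x‖)^(-a)) := by rw [hrp]; ring
  -- continuity of g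
  have hgcont : Continuous g := by
    apply Real.continuous_exp.comp
    apply continuous_const.mul
    exact (continuous_const.add continuous_norm).rpow_const fun x => Or.inl (by simp only [Pi.add_apply]; positivity)
  -- bound g ≤ exp K
  have hgle : ∀ x : R3, g x ≤ Real.exp K := by
    intro x
    apply Real.exp_le_exp.2
    calc K * (1+‖x‖)^b ≤ K * 1 := by
          apply mul_le_mul_of_nonneg_left _ hKpos.le
          apply Real.rpow_le_one_of_one_le_of_nonpos (by linarith [norm_nonneg x])
          rw [hb]; linarith
      _ = K := mul_one K
  -- integrability of the first integrand
  have hI1eq : (fun x : R3 => ‖(↑(g x) : ℂ) • c‖^2 * (1+‖x‖)^(-a))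
      = fun x : R3 => (g x)^2 * ‖c‖^2 * (1+‖x‖)^(-a) := funext fun x => by rw [hψnorm]
  have hbase : Integrable (fun x : R3 => (1+‖x‖)^(-a)) := by
    apply integrable_one_add_norm
    simp only [finrank_euclideanSpace, Fintype.card_fin]
    exact_mod_cast ha
  have hI1 : Integrable (fun x : R3 => ‖(↑(g x) : ℂ) • c‖^2 * (1+‖x‖)^(-a)) := by
    rw [hI1eq]
    apply Integrable.mono' (hbase.const_mul ((Real.exp K)^2 * ‖c‖^2))
    · apply Continuous.aestronglyMeasurable
      apply Continuous.mul
      · exact (hgcont.pow 2).mul continuous_const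
      · exact (continuous_const.add continuous_norm).rpow_const fun x => Or.inl (by simp only [Pi.add_apply]; positivity)
    · refine Filter.Eventually.of_forall fun x => ?_
      have hp : (0:ℝ) < (1+‖x‖)^(-a) := Real.rpow_pos_of_pos (by positivity) _
      rw [Real.norm_eq_abs, abs_of_nonneg (by positivity)]
      have : (g x)^2 ≤ (Real.exp K)^2 := by
        apply pow_le_pow_left₀ (hgpos x).le (hgle x)
      calc (g x)^2 * ‖c‖^2 * (1+‖x‖)^(-a) ≤ (Real.exp K)^2 * ‖c‖^2 * (1+‖x‖)^(-a) := by
            apply mul_le_mul_of_nonneg_right _ hp.le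
            apply mul_le_mul_of_nonneg_right this (by positivity)
        _ = (Real.exp K)^2 * ‖c‖^2 * (1+‖x‖)^(-a) := rfl
  -- integrand 2 equals integrand 1
  have hI2eq : (fun x : R3 => ‖spinOrbit (fun y : R3 => (↑(g y) : ℂ) • c) x‖^2 * (1+‖x‖)^(-a))
      = fun x : R3 => ‖(↑(g x) : ℂ) • c‖^2 * (1+‖x‖)^(-a) := funext fun x => by rw [hspin]
  have hI2 : Integrable
      (fun x : R3 => ‖spinOrbit (fun y : R3 => (↑(g y) : ℂ) • c) x‖^2 * (1+‖x‖)^(-a)) := by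
    rw [hI2eq]; exact hI1
  -- a.e. equality for integrand 3
  have hae : ∀ᵐ x : R3, x ≠ 0 := by
    rw [MeasureTheory.ae_iff]
    simpa using measure_singleton (0 : R3)
  have hI3ae : (fun x : R3 => ‖masslessDirac (fun y : R3 => (↑(g y) : ℂ) • c) x‖^2 * (1+‖x‖)^a)
      =ᵐ[volume] fun x : R3 => τ^2 * (‖(↑(g x) : ℂ) • c‖^2 * (1+‖x‖)^(-a)) :=
    hae.mono fun x hx => hpt x hx
  have hI3 : Integrable
      (fun x : R3 => ‖masslessDirac (fun y : R3 => (↑(g y) : ℂ) • c) x‖^2 * (1+‖x‖)^a) := by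
    apply Integrable.congr _ hI3ae.symm
    exact (hI1.const_mul (τ^2)).congr (Filter.EventuallyEq.refl _ _) |>.congr
      (Filter.Eventually.of_forall fun x => by ring)
  refine ⟨⟨hI1, hI2, hI3⟩, ?_, ?_, ?_⟩
  · rw [hI2eq]
  · rw [hI2eq, integral_congr_ae hI3ae, MeasureTheory.integral_const_mul]
  · intro hc hcontra
    have := congrFun hcontra 0
    simp only [Pi.zero_apply] at this
    rw [smul_eq_zero] at this
    rcases this with h | h
    · exact Complex.ofReal_ne_zero.2 (Real.exp_ne_zero _) h
    · exact hc h
end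
end

section
/- Let c ∈ ℂ⁴ and define ψ₀ : ℝ³ → ℂ⁴ by ψ₀(x) = exp(e^{1−|x|}) c. Then for every x ∈ ℝ³ with x ≠ 0, −i Σ_{j=1}^3 α_j ∂_jψ₀(x) = e · e^{−|x|} · i (α·x̂) ψ₀(x); equivalently, ψ₀ solves the Euler–Lagrange equation −iα·∇ψ₀ + e (−i α·x̂) e^{−|x|} ((1+2S·L)ψ₀) = 0 on ℝ³∖{0}. -/
open MeasureTheory Real ComplexConjugate
open scoped InnerProductSpace

noncomputable section

lemma hasFDerivAt_norm3 (x : R3) (hx : x ≠ 0) :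
    HasFDerivAt (fun y : R3 => ‖y‖) ((‖x‖⁻¹ : ℝ) • innerSL ℝ x) x := by
  have hsq : HasFDerivAt (fun y : R3 => ‖y‖ ^ 2) (2 • innerSL ℝ x) x := by
    simpa using (hasFDerivAt_id x).norm_sq
  have hnx : (0:ℝ) < ‖x‖ := norm_pos_iff.mpr hx
  have hs : HasDerivAt Real.sqrt (1 / (2 * Real.sqrt (‖x‖^2))) (‖x‖^2) :=
    Real.hasDerivAt_sqrt (by positivity)
  have h2 := hs.comp_hasFDerivAt x hsq
  have heq : (Real.sqrt ∘ fun y : R3 => ‖y‖^2) = fun y : R3 => ‖y‖ := by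
    funext y; simp [Function.comp, Real.sqrt_sq (norm_nonneg y)]
  rw [heq] at h2
  refine h2.congr_fderiv ?_; symm
  rw [Real.sqrt_sq hnx.le]
  ext v
  simp [smul_smul]
  field_simp

lemma psi_pderiv (c : C4) (ψ₀ : R3 → C4)
    (hψ₀ : ∀ x : R3, ψ₀ x = (Real.exp (Real.exp (1 - ‖x‖)) : ℂ) • c)
    (x : R3) (hx : x ≠ 0) (j : Fin 3) :
    pderiv3 j ψ₀ x =
      ((-(Real.exp (Real.exp (1 - ‖x‖)) * Real.exp (1 - ‖x‖) / ‖x‖) * x j : ℝ) : ℂ) • c := by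
  have hψ : ψ₀ = fun y : R3 => ((Real.exp (Real.exp (1 - ‖y‖)) : ℝ) : ℂ) • c := funext hψ₀
  have hnx : (0:ℝ) < ‖x‖ := norm_pos_iff.mpr hx
  have h1 : HasFDerivAt (fun y : R3 => (1 : ℝ) - ‖y‖)
      (-((‖x‖⁻¹ : ℝ) • innerSL ℝ x)) x := by
    simpa using (hasFDerivAt_const (1:ℝ) x).fun_sub (hasFDerivAt_norm3 x hx)
  have h2 : HasFDerivAt (fun y : R3 => Real.exp (1 - ‖y‖))
      (Real.exp (1 - ‖x‖) • -((‖x‖⁻¹ : ℝ) • innerSL ℝ x)) x :=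
    (Real.hasDerivAt_exp _).comp_hasFDerivAt x h1
  have h3 : HasFDerivAt (fun y : R3 => Real.exp (Real.exp (1 - ‖y‖)))
      (Real.exp (Real.exp (1 - ‖x‖)) •
        (Real.exp (1 - ‖x‖) • -((‖x‖⁻¹ : ℝ) • innerSL ℝ x))) x :=
    (Real.hasDerivAt_exp _).comp_hasFDerivAt x h2
  have h4 : HasFDerivAt (fun y : R3 => ((Real.exp (Real.exp (1 - ‖y‖)) : ℝ) : ℂ))
      (Complex.ofRealCLM.comp (Real.exp (Real.exp (1 - ‖x‖)) •
        (Real.exp (1 - ‖x‖) • -((‖x‖⁻¹ : ℝ) • innerSL ℝ x)))) x :=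
    Complex.ofRealCLM.hasFDerivAt.comp x h3
  have h5 := h4.smul_const c
  rw [pderiv3, hψ, h5.fderiv]
  simp [smul_smul, EuclideanSpace.inner_single_right, real_inner_comm]
  congr 1
  ring

lemma act_smulV (M : Matrix (Fin 4) (Fin 4) ℂ) (a : ℂ) (v : C4) :
    act M (a • v) = a • act M v := by
  unfold act; rw [WithLp.ofLp_smul, M.mulVec_smul]; rfl

lemma act_smulM (a : ℂ) (M : Matrix (Fin 4) (Fin 4) ℂ) (v : C4) :
    act (a • M) v = a • act M v := by
  unfold act; rw [Matrix.smul_mulVec]; rfl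

lemma act_zeroV (M : Matrix (Fin 4) (Fin 4) ℂ) : act M (0 : C4) = 0 := by
  ext i; simp [act, Matrix.mulVec, dotProduct]

lemma act_sumM (M : Fin 3 → Matrix (Fin 4) (Fin 4) ℂ) (v : C4) :
    act (∑ j, M j) v = ∑ j, act (M j) v := by
  classical
  unfold act
  induction (Finset.univ : Finset (Fin 3)) using Finset.induction with
  | empty => simp [Matrix.zero_mulVec]
  | insert _ _ h ih => rw [Finset.sum_insert h, Finset.sum_insert h, Matrix.add_mulVec, WithLp.toLp_add, ih]

/-- The exponential-weight minimiser solves the Euler-Lagrange equation. -/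
theorem euler_lagrange_exponential (c : C4) (ψ₀ : R3 → C4)
    (hψ₀ : ∀ x : R3, ψ₀ x = (Real.exp (Real.exp (1 - ‖x‖)) : ℂ) • c)
    (x : R3) (hx : x ≠ 0) :
    masslessDirac ψ₀ x =
        ((Real.exp 1 * Real.exp (-‖x‖) : ℝ) : ℂ) •
          (Complex.I • act (alphaHat x) (ψ₀ x)) ∧
      masslessDirac ψ₀ x + (Real.exp 1 : ℂ) •
        ((-Complex.I) • act (alphaHat x)
          (((Real.exp (-‖x‖) : ℝ) : ℂ) • spinOrbit ψ₀ x)) = 0 := by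
  have hnx : (0:ℝ) < ‖x‖ := norm_pos_iff.mpr hx
  have hnxC : ((‖x‖ : ℝ) : ℂ) ≠ 0 := by exact_mod_cast hnx.ne'
  have hp := psi_pderiv c ψ₀ hψ₀ x hx
  have hr : Real.exp 1 * Real.exp (-‖x‖) = Real.exp (1 - ‖x‖) := by
    rw [← Real.exp_add]; ring_nf
  have h1 : masslessDirac ψ₀ x =
      ((Real.exp 1 * Real.exp (-‖x‖) : ℝ) : ℂ) •
        (Complex.I • act (alphaHat x) (ψ₀ x)) := by
    unfold masslessDirac alphaHat
    rw [hψ₀ x, hr]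
    simp only [hp, act_smulV, act_sumM, act_smulM, Finset.smul_sum, smul_smul]
    refine Finset.sum_congr rfl fun j _ => ?_
    congr 1
    push_cast
    field_simp
  refine ⟨h1, ?_⟩
  have horb : ∀ j, orbL j ψ₀ x = 0 := by
    intro j
    unfold orbL
    rw [hp (j+2), hp (j+1)]
    simp only [smul_smul, ← sub_smul]
    have hz : ((x (j+1) : ℂ) * ((-(Real.exp (Real.exp (1 - ‖x‖)) * Real.exp (1 - ‖x‖) / ‖x‖)
        * x (j+2) : ℝ) : ℂ) - (x (j+2) : ℂ) * ((-(Real.exp (Real.exp (1 - ‖x‖)) *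
        Real.exp (1 - ‖x‖) / ‖x‖) * x (j+1) : ℝ) : ℂ)) = 0 := by
      push_cast; ring
    rw [hz]
    simp
  have hso : spinOrbit ψ₀ x = ψ₀ x := by
    unfold spinOrbit
    simp [horb, act_zeroV]
  rw [h1, hso]
  simp only [act_smulV, smul_smul, ← add_smul]
  have hz : (((Real.exp 1 * Real.exp (-‖x‖) : ℝ) : ℂ) * Complex.I +
      (Real.exp 1 : ℂ) * (-Complex.I * ((Real.exp (-‖x‖) : ℝ) : ℂ))) = 0 := by
    push_cast; ring
  rw [hz, zero_smul]
end
end
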